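/- Let q ∈ ℂ with |q| < 1, let F be an odd positive integer, and let χ be a Dirichlet character modulo F with values in ℂ. Then l_q(0, χ) = ([2]_q/[2]_{q^F})·Σ_{a=1}^{F} (−1)^a q^a χ(a), where l_q(0, χ) = [2]_q·Σ_{m=1}^{∞} (−1)^m q^m χ(m) (the series converging absolutely). -/

import Mathlib

set_option maxHeartbeats 1000000


open Finset

/-- For `q ∈ ℂ` with `|q| < 1`, an odd positive integer `F`, and a Dirichlet character `χ`
mod `F` with values in `ℂ`:
`l_q(0,χ) = [2]_q ∑_{m≥1} (-1)^m q^m χ(m)` (absolutely convergent) equals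
`([2]_q/[2]_{q^F}) ∑_{a=1}^F (-1)^a q^a χ(a)`. -/
theorem lq_at_zero (q : ℂ) (hq : ‖q‖ < 1)
    (F : ℕ) (hF : Odd F) (hF0 : 0 < F)
    (χ : DirichletCharacter ℂ F) :
    Summable (fun m : ℕ =>
      ‖(-1 : ℂ) ^ (m + 1) * q ^ (m + 1) * χ ((m + 1 : ℕ) : ZMod F)‖) ∧
    (1 + q) * ∑' m : ℕ, (-1 : ℂ) ^ (m + 1) * q ^ (m + 1) * χ ((m + 1 : ℕ) : ZMod F)
      = ((1 + q) / (1 + q ^ F)) *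
          ∑ a ∈ Finset.Icc 1 F, (-1 : ℂ) ^ a * q ^ a * χ (a : ZMod F) := by
  haveI : NeZero F := ⟨hF0.ne'⟩
  set g : ℕ → ℂ := fun m => (-1 : ℂ) ^ (m + 1) * q ^ (m + 1) * χ ((m + 1 : ℕ) : ZMod F)
    with hg
  have hgs : Summable (fun m => ‖g m‖) := by
    apply Summable.of_nonneg_of_le (fun m => norm_nonneg _)
      (fun m => ?_) (summable_geometric_of_lt_one (norm_nonneg q) hq)
    calc ‖g m‖ ≤ ‖(-1 : ℂ) ^ (m + 1) * q ^ (m + 1)‖ * 1 := by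
          rw [norm_mul]
          exact mul_le_mul_of_nonneg_left (DirichletCharacter.norm_le_one χ _) (norm_nonneg _)
      _ ≤ ‖q‖ ^ m := by
          rw [mul_one, norm_mul, norm_pow, norm_pow, norm_neg, norm_one, one_pow, one_mul,
            pow_succ]
          exact mul_le_of_le_one_right (pow_nonneg (norm_nonneg q) m) hq.le
  have hgsum : Summable g := hgs.of_norm
  refine ⟨hgs, ?_⟩
  -- key pointwise identity
  have key : ∀ k : ℕ, ∀ r : Fin F,
      g ((Nat.divModEquiv F).symm (k, r)) =
        (-q ^ F) ^ k * ((-1 : ℂ) ^ ((r : ℕ) + 1) * q ^ ((r : ℕ) + 1) * χ (((r : ℕ) + 1 : ℕ) : ZMod F)) := by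
    intro k r
    have hm : (Nat.divModEquiv F).symm (k, r) = k * F + (r : ℕ) := rfl
    have hχ : ((k * F + (r : ℕ) + 1 : ℕ) : ZMod F) = (((r : ℕ) + 1 : ℕ) : ZMod F) := by
      push_cast
      simp [ZMod.natCast_self]
    rw [hm, hg]
    simp only [hχ]
    have he : k * F + (r : ℕ) + 1 = F * k + ((r : ℕ) + 1) := by ring
    rw [he, pow_add q, pow_mul q, pow_add (-1 : ℂ), pow_mul (-1 : ℂ), hF.neg_one_pow,
      neg_pow (q ^ F) k]
    ring
  -- rewrite tsum via the equivalence
  have h1 : ∑' m : ℕ, g m = ∑' p : ℕ × Fin F, g ((Nat.divModEquiv F).symm p) :=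
    ((Nat.divModEquiv F).symm.tsum_eq g).symm
  have hsum2 : Summable fun p : ℕ × Fin F => g ((Nat.divModEquiv F).symm p) :=
    (Nat.divModEquiv F).symm.summable_iff.mpr hgsum
  have h2 : ∑' p : ℕ × Fin F, g ((Nat.divModEquiv F).symm p)
      = ∑' k : ℕ, ∑' r : Fin F, g ((Nat.divModEquiv F).symm (k, r)) :=
    Summable.tsum_prod' hsum2 (fun k => ⟨_, hasSum_fintype _⟩)
  have hgeo : ∑' k : ℕ, (-q ^ F) ^ k = (1 + q ^ F)⁻¹ := by
    have hnorm : ‖-q ^ F‖ < 1 := by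
      rw [norm_neg, norm_pow]
      exact pow_lt_one₀ (norm_nonneg q) hq (by omega)
    rw [tsum_geometric_of_norm_lt_one hnorm, sub_neg_eq_add]
  have hfin : ∀ k : ℕ, ∑' r : Fin F, g ((Nat.divModEquiv F).symm (k, r))
      = (-q ^ F) ^ k * ∑ a ∈ Finset.Icc 1 F, (-1 : ℂ) ^ a * q ^ a * χ (a : ZMod F) := by
    intro k
    rw [tsum_fintype]
    simp only [key]
    rw [← Finset.mul_sum]
    congr 1
    calc ∑ r : Fin F, (-1 : ℂ) ^ ((r : ℕ) + 1) * q ^ ((r : ℕ) + 1) * χ (((r : ℕ) + 1 : ℕ) : ZMod F)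
        = ∑ i ∈ Finset.range F,
            (-1 : ℂ) ^ (i + 1) * q ^ (i + 1) * χ ((i + 1 : ℕ) : ZMod F) :=
          Fin.sum_univ_eq_sum_range
            (fun i => (-1 : ℂ) ^ (i + 1) * q ^ (i + 1) * χ ((i + 1 : ℕ) : ZMod F)) F
      _ = ∑ a ∈ Finset.Icc 1 F, (-1 : ℂ) ^ a * q ^ a * χ (a : ZMod F) := by
          rw [← Finset.Ico_add_one_right_eq_Icc, Finset.sum_Ico_eq_sum_range, Nat.add_sub_cancel]
          exact (Finset.sum_congr rfl fun i _ => by rw [add_comm 1 i]).symm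
  rw [h1, h2]
  simp only [hfin]
  rw [tsum_mul_right, hgeo]
  rw [div_eq_mul_inv]
  ring
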